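/- arXiv:2007.13383 — 6 statements merged into one kernel-verified Lean document; each statement's English description precedes it below -/
import Mathlib

section
/- If a group G contains a balanced subgroup H of finite index, then G itself is balanced. -/
def IsBalancedGroup (G : Type*) [Group G] : Prop :=
  ∀ g : G, ¬ IsOfFinOrder g → ∀ h : G, ∀ n m : ℤ, h * g ^ n * h⁻¹ = g ^ m → |n| = |m|

theorem balanced_of_finiteIndex_balanced_subgroup {G : Type*} [Group G]
    (H : Subgroup G) (hfi : H.FiniteIndex) (hH : IsBalancedGroup H) : IsBalancedGroup G := by
  intro g hg h n m hconj
  obtain ⟨d, hd0, -, hdH⟩ := H.exists_pow_mem_of_index_ne_zero hfi.index_ne_zero g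
  obtain ⟨e, he0, -, heH⟩ := H.exists_pow_mem_of_index_ne_zero hfi.index_ne_zero h
  -- key iterated conjugation identity
  have key : ∀ j : ℕ, h ^ j * g ^ (n ^ j) * (h ^ j)⁻¹ = g ^ (m ^ j) := by
    intro j
    induction j with
    | zero => simp
    | succ j ih =>
      have h1 : h ^ j * g ^ (n ^ j * n) * (h ^ j)⁻¹ = g ^ (m ^ j * n) := by
        rw [zpow_mul, zpow_mul, ← ih, conj_zpow]
      calc h ^ (j + 1) * g ^ (n ^ (j + 1)) * (h ^ (j + 1))⁻¹
          = h * (h ^ j * g ^ (n ^ j * n) * (h ^ j)⁻¹) * h⁻¹ := by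
            rw [pow_succ']
            simp [mul_assoc, pow_succ]
        _ = h * g ^ (m ^ j * n) * h⁻¹ := by rw [h1]
        _ = (h * g ^ n * h⁻¹) ^ (m ^ j) := by
            rw [conj_zpow, ← zpow_mul, mul_comm]
        _ = g ^ (m ^ (j + 1)) := by rw [hconj, ← zpow_mul, pow_succ, mul_comm]
  have keye := key e
  -- raise to the d power
  have keyd : h ^ e * g ^ ((n : ℤ) ^ e * d) * (h ^ e)⁻¹ = g ^ ((m : ℤ) ^ e * d) := by
    rw [zpow_mul, zpow_mul, ← keye, conj_zpow]
  set a : H := ⟨g ^ d, hdH⟩ with ha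
  set b : H := ⟨h ^ e, heH⟩ with hb
  have hcoe : ∀ k : ℤ, ((a ^ k : H) : G) = g ^ ((d : ℤ) * k) := by
    intro k
    push_cast [ha]
    rw [← zpow_natCast g d, ← zpow_mul]
  have hin : b * a ^ ((n : ℤ) ^ e) * b⁻¹ = a ^ ((m : ℤ) ^ e) := by
    apply Subtype.ext
    push_cast [ha, hb]
    rw [← zpow_natCast g d, ← zpow_mul, ← zpow_mul, mul_comm ((d:ℤ)), mul_comm ((d:ℤ))]
    exact keyd
  have hfin : ¬ IsOfFinOrder a := by
    intro hfa
    apply hg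
    have : IsOfFinOrder ((a : G)) := by
      rw [isOfFinOrder_iff_pow_eq_one] at hfa ⊢
      obtain ⟨k, hk, hk1⟩ := hfa
      exact ⟨k, hk, by rw [← Subgroup.coe_pow, hk1, Subgroup.coe_one]⟩
    exact (this.of_pow (by omega) : IsOfFinOrder g)
  have habs := hH a hfin b _ _ hin
  rw [abs_pow, abs_pow] at habs
  rw [Int.abs_eq_natAbs, Int.abs_eq_natAbs] at habs ⊢
  have hnat : n.natAbs ^ e = m.natAbs ^ e := by exact_mod_cast habs
  have := Nat.pow_left_injective (by omega) hnat
  exact_mod_cast this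
end

section
/- Every virtually cyclic group is balanced. -/
theorem balanced_of_virtually_cyclic {G : Type*} [Group G]
    (hG : ∃ H : Subgroup G, IsCyclic H ∧ H.FiniteIndex) : IsBalancedGroup G := by
  intro g hg h n m hconj
  obtain ⟨H, hHcyc, hHfin⟩ := hG
  haveI := hHfin
  set N := H.normalCore with hNdef
  haveI : N.Normal := H.normalCore_normal
  haveI : N.FiniteIndex := Subgroup.finiteIndex_normalCore H
  haveI : IsCyclic N := by
    haveI := hHcyc
    have hle : N ≤ H := H.normalCore_le
    exact isCyclic_of_surjective (Subgroup.subgroupOfEquivOfLe hle)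
      (Subgroup.subgroupOfEquivOfLe hle).surjective
  obtain ⟨z, hz⟩ := IsCyclic.exists_generator (α := N)
  set K : ℤ := (N.index : ℤ) with hKdef
  have hK : K ≠ 0 :=
    Int.natCast_ne_zero.mpr (Subgroup.FiniteIndex.index_ne_zero (H := N))
  have hgK : g ^ K ∈ N := by
    have := N.pow_index_mem g
    rw [hKdef, zpow_natCast]
    exact this
  obtain ⟨a, ha⟩ := Subgroup.mem_zpowers_iff.mp (hz ⟨g ^ K, hgK⟩)
  set w : G := (z : G) with hwdef
  have haG : w ^ a = g ^ K := by
    have := congrArg (Subtype.val) ha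
    simpa [hwdef] using this
  have hgKinf : ¬ IsOfFinOrder (g ^ K) := by
    intro hf
    rw [hKdef, zpow_natCast] at hf
    exact hg (hf.of_pow (Subgroup.FiniteIndex.index_ne_zero (H := N)))
  have hwinf : ¬ IsOfFinOrder w := fun hf => hgKinf (haG ▸ hf.zpow)
  have hwinj : Function.Injective fun t : ℤ => w ^ t :=
    injective_zpow_iff_not_isOfFinOrder.mpr hwinf
  have ha0 : a ≠ 0 := by
    intro h0
    apply hgKinf
    rw [← haG, h0, zpow_zero]
    exact IsOfFinOrder.one
  -- conjugates of w
  have hw1 : h * w * h⁻¹ ∈ N := Subgroup.Normal.conj_mem ‹N.Normal› w z.2 h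
  obtain ⟨b, hb⟩ := Subgroup.mem_zpowers_iff.mp (hz ⟨h * w * h⁻¹, hw1⟩)
  have hbG : w ^ b = h * w * h⁻¹ := by
    have := congrArg (Subtype.val) hb
    simpa [hwdef] using this
  have hw2 : h⁻¹ * w * h ∈ N := by
    have := Subgroup.Normal.conj_mem ‹N.Normal› w z.2 h⁻¹
    simpa using this
  obtain ⟨c, hc⟩ := Subgroup.mem_zpowers_iff.mp (hz ⟨h⁻¹ * w * h, hw2⟩)
  have hcG : w ^ c = h⁻¹ * w * h := by
    have := congrArg (Subtype.val) hc
    simpa [hwdef] using this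
  -- b is a unit
  have hbc : w ^ (c * b) = w ^ (1 : ℤ) := by
    rw [zpow_one, zpow_mul, hcG]
    calc (h⁻¹ * w * h) ^ b = h⁻¹ * w ^ b * h := by
          simpa using conj_zpow (i := b) (a := h⁻¹) (b := w)
      _ = w := by rw [hbG]; group
  have hcb1 : c * b = 1 := hwinj hbc
  have hbu : b = 1 ∨ b = -1 :=
    Int.isUnit_iff.mp (IsUnit.of_mul_eq_one (a := b) c (by linarith [mul_comm c b]))
  -- main computation
  have h1 : h * w ^ (a * n) * h⁻¹ = w ^ (b * (a * n)) := by
    symm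
    rw [zpow_mul, hbG, conj_zpow]
  have h2 : h * w ^ (a * n) * h⁻¹ = g ^ (m * K) := by
    have e1 : w ^ (a * n) = (g ^ n) ^ K := by
      rw [zpow_mul, haG, ← zpow_mul, mul_comm, zpow_mul]
    rw [e1, ← conj_zpow, hconj, ← zpow_mul]
  have h3 : w ^ (a * m) = g ^ (m * K) := by
    rw [zpow_mul, haG, ← zpow_mul, mul_comm]
  have key : w ^ (b * (a * n)) = w ^ (a * m) := by
    rw [h3, ← h2, h1]
  have heq : b * (a * n) = a * m := hwinj key
  have hbn : b * n = m := by
    have h4 : a * (b * n) = a * m := by rw [← heq]; ring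
    exact mul_left_cancel₀ ha0 h4
  rcases hbu with rfl | rfl
  · rw [← hbn, one_mul]
  · rw [← hbn, neg_one_mul, abs_neg]
end

section
/- Let G be a group and let Φ₁, Φ₂ : G → D∞ be group homomorphisms to the infinite dihedral group, each with finite kernel and image of finite index in D∞. Then ker(Φ₁) = ker(Φ₂). -/
open DihedralGroup

private instance : IsDomain (ZMod 0) := inferInstanceAs (IsDomain ℤ)
private instance : CharZero (ZMod 0) := inferInstanceAs (CharZero ℤ)

private lemma dihedral_r_pow (a : ZMod 0) (k : ℕ) :
    (r a : DihedralGroup 0) ^ k = r ((k : ZMod 0) * a) := by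
  induction k with
  | zero => simp
  | succ k ih =>
      rw [pow_succ, ih, r_mul_r]
      congr 1
      push_cast
      ring

private lemma dihedral_inv_r (a : ZMod 0) : (r a : DihedralGroup 0)⁻¹ = r (-a) := rfl

private lemma ker_le_aux {G : Type*} [Group G]
    (Φ₁ Φ₂ : G →* DihedralGroup 0)
    (h₁ : Finite Φ₁.ker) (h₂' : Φ₂.range.FiniteIndex) :
    Φ₁.ker ≤ Φ₂.ker := by
  classical
  -- the image of ker Φ₁ under Φ₂ is a finite set
  have hker : (Φ₁.ker : Set G).Finite := Set.toFinite _
  have hS : ((Φ₂ '' (Φ₁.ker : Set G)) : Set (DihedralGroup 0)).Finite := hker.image _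
  -- there is a nonzero n with r n ∈ range Φ₂
  obtain ⟨n, hn0, x, hx⟩ : ∃ n : ZMod 0, n ≠ 0 ∧ ∃ x : G, Φ₂ x = r n := by
    haveI : Finite (DihedralGroup 0 ⧸ Φ₂.range) := Φ₂.range.finite_quotient_of_finiteIndex
    obtain ⟨a, b, hab, h⟩ := Finite.exists_ne_map_eq_of_infinite
      (fun k : ZMod 0 => QuotientGroup.mk (s := Φ₂.range) (r k))
    have hmem : (r a : DihedralGroup 0)⁻¹ * r b ∈ Φ₂.range := (QuotientGroup.eq).mp h
    rw [dihedral_inv_r, r_mul_r] at hmem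
    obtain ⟨x, hx⟩ := hmem
    exact ⟨-a + b, by intro hc; apply hab; linear_combination -hc, x, hx⟩
  intro g hg
  -- g has finite order
  have hfo : IsOfFinOrder g := by
    have h0 : IsOfFinOrder (⟨g, hg⟩ : Φ₁.ker) := isOfFinOrder_of_finite _
    simpa using Φ₁.ker.subtype.isOfFinOrder h0
  have hfo2 : IsOfFinOrder (Φ₂ g) := Φ₂.isOfFinOrder hfo
  show Φ₂ g = 1
  rcases hΦ : Φ₂ g with i | i
  · -- rotation case: finite order forces i = 0
    rw [hΦ] at hfo2
    obtain ⟨m, hm, hpow⟩ := hfo2.exists_pow_eq_one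
    rw [dihedral_r_pow, one_def] at hpow
    have hmi : (m : ZMod 0) * i = 0 := by injection hpow
    have hi : i = 0 := by
      rcases mul_eq_zero.mp hmi with h | h
      · exact absurd (by exact_mod_cast h) hm.ne'
      · exact h
    rw [hi, one_def]
  · -- reflection case: infinitely many distinct conjugates, contradiction
    exfalso
    have hconj : ∀ k : ℕ, (sr (i - 2 * ((k : ZMod 0) * n)) : DihedralGroup 0)
        ∈ Φ₂ '' (Φ₁.ker : Set G) := by
      intro k
      refine ⟨x ^ k * g * (x ^ k)⁻¹,
        (MonoidHom.normal_ker Φ₁).conj_mem g hg (x ^ k), ?_⟩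
      rw [map_mul, map_mul, map_inv, map_pow, hx, hΦ, dihedral_r_pow,
        dihedral_inv_r, r_mul_sr, sr_mul_r]
      congr 1
      ring
    have hinj : Function.Injective
        (fun k : ℕ => (sr (i - 2 * ((k : ZMod 0) * n)) : DihedralGroup 0)) := by
      intro a b hab
      simp only [sr.injEq] at hab
      have h2 : (2 : ZMod 0) * ((a : ZMod 0) * n) = 2 * ((b : ZMod 0) * n) := by
        linear_combination -hab
      have h3 : (a : ZMod 0) * n = (b : ZMod 0) * n :=
        mul_left_cancel₀ two_ne_zero h2
      have h4 : (a : ZMod 0) = b := mul_right_cancel₀ hn0 h3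
      exact_mod_cast h4
    exact (Set.infinite_of_injective_forall_mem hinj hconj) hS

theorem ker_eq_of_finiteKernel_finiteIndex_toDihedral {G : Type*} [Group G]
    (Φ₁ Φ₂ : G →* DihedralGroup 0)
    (h₁ : Finite Φ₁.ker) (h₂ : Finite Φ₂.ker)
    (h₁' : Φ₁.range.FiniteIndex) (h₂' : Φ₂.range.FiniteIndex) :
    Φ₁.ker = Φ₂.ker :=
  le_antisymm (ker_le_aux Φ₁ Φ₂ h₁ h₂') (ker_le_aux Φ₂ Φ₁ h₂ h₁')
end

section
/- There is no group G admitting both a surjective homomorphism Φ : G → ℤ with finite kernel and a surjective homomorphism Φ' : G → D∞ with finite kernel. -/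
theorem no_group_surjects_onto_int_and_infinite_dihedral
    (G : Type*) [Group G] (Φ : G →* Multiplicative ℤ) (Φ' : G →* DihedralGroup 0)
    (hΦ : Function.Surjective Φ) (hΦ' : Function.Surjective Φ')
    (hker : Finite Φ.ker) (hker' : Finite Φ'.ker) : False := by
  classical
  have key : ∀ i : ZMod 0, ∃ g : G, Φ' g = DihedralGroup.sr i ∧ g ∈ Φ.ker := by
    intro i
    obtain ⟨g, hg⟩ := hΦ' (DihedralGroup.sr i)
    refine ⟨g, hg, ?_⟩
    have h2 : g ^ 2 ∈ Φ'.ker := by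
      simp [MonoidHom.mem_ker, pow_two, hg, DihedralGroup.sr_mul_self]
    have hfin2 : IsOfFinOrder (g ^ 2) := by
      have : IsOfFinOrder (⟨g ^ 2, h2⟩ : Φ'.ker) := isOfFinOrder_of_finite _
      exact Submonoid.isOfFinOrder_coe.mpr this
    have hfin : IsOfFinOrder g := hfin2.of_pow (by norm_num)
    have hΦg : IsOfFinOrder (Φ g) := Φ.isOfFinOrder hfin
    obtain ⟨n, hn, hpow⟩ := isOfFinOrder_iff_pow_eq_one.mp hΦg
    have : (n : ℤ) * Multiplicative.toAdd (Φ g) = 0 := by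
      have := congrArg Multiplicative.toAdd hpow
      simpa [toAdd_pow] using this
    have hz : Multiplicative.toAdd (Φ g) = 0 := by
      rcases mul_eq_zero.mp this with h | h
      · exact absurd (by exact_mod_cast h) hn.ne'
      · exact h
    simpa [MonoidHom.mem_ker, ← toAdd_eq_zero] using hz
  choose f hf1 hf2 using key
  have : Function.Injective (fun i : ZMod 0 => (⟨f i, hf2 i⟩ : Φ.ker)) := by
    intro i j h
    have : Φ' (f i) = Φ' (f j) := by rw [Subtype.ext_iff] at h; simp at h; rw [h]
    rw [hf1 i, hf1 j] at this
    simpa using this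
  have : Infinite Φ.ker := Infinite.of_injective _ this
  exact absurd hker (by rw [not_finite_iff_infinite]; exact this)
end

section
/- In the Baumslag–Solitar group BS(m,n) = ⟨a, t ∣ t a^m t⁻¹ = a^n⟩ with m, n nonzero integers, the generator a has infinite order. -/
def BSRels (m n : ℤ) : Set (FreeGroup (Fin 2)) :=
  { FreeGroup.of 1 * FreeGroup.of 0 ^ m * (FreeGroup.of 1)⁻¹ * (FreeGroup.of 0 ^ n)⁻¹ }

abbrev BS (m n : ℤ) := PresentedGroup (BSRels m n)

def BS.a (m n : ℤ) : BS m n := PresentedGroup.of 0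

def BS.t (m n : ℤ) : BS m n := PresentedGroup.of 1

theorem BS_a_infinite_order (m n : ℤ) (hm : m ≠ 0) (hn : n ≠ 0) :
    ¬ IsOfFinOrder (BS.a m n) := by
  have hc : ((n : ℚ) / m) ≠ 0 := by
    simp [hm, hn]
  set f : Fin 2 → Equiv.Perm ℚ := ![Equiv.addRight 1, Equiv.mulLeft₀ ((n : ℚ)/m) hc]
    with hf
  have hrel : ∀ r ∈ BSRels m n, FreeGroup.lift f r = 1 := by
    intro r hr
    rcases hr with rfl
    simp only [map_mul, map_zpow, map_inv, FreeGroup.lift_apply_of, hf]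
    simp only [Matrix.cons_val_zero, Matrix.cons_val_one, Matrix.head_cons]
    rw [Equiv.zsmul_addRight, Equiv.zsmul_addRight]
    ext x
    simp only [Equiv.Perm.mul_apply, Equiv.Perm.one_apply]
    rw [Equiv.Perm.inv_def, Equiv.Perm.inv_def]
    simp [Equiv.mulLeft₀, Equiv.addRight, Equiv.subRight]
    field_simp
    ring
  let φ : BS m n →* Equiv.Perm ℚ := PresentedGroup.toGroup hrel
  intro h
  have h2 : IsOfFinOrder (φ (BS.a m n)) := φ.isOfFinOrder h
  have ha : φ (BS.a m n) = Equiv.addRight (1 : ℚ) := by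
    simp [φ, BS.a, PresentedGroup.toGroup.of, hf]
  rw [ha] at h2
  obtain ⟨k, hk, hpow⟩ := (isOfFinOrder_iff_pow_eq_one).mp h2
  have := congrArg (fun e : Equiv.Perm ℚ => e 0) hpow
  simp [Equiv.nsmul_addRight] at this
  omega
end

section
/- Let H be a balanced group, A, B ≤ H subgroups with an isomorphism φ : A → B, and let G = H∗_φ be the corresponding HNN extension with stable letter t. If g ∈ H is an infinite order element such that no power of g is conjugate in H into A ∪ B, then g is balanced in G: for every k ∈ G and integers n, m, k gⁿ k⁻¹ = gᵐ implies |n| = |m|. -/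
open HNNExtension HNNExtension.NormalWord List

namespace BalAux

variable {G : Type*} [Group G] {A B : Subgroup G} (φ : A ≃* B)

theorem key (c : G) (hc : ∀ x : G, x * c * x⁻¹ ∉ (A : Set G) ∪ (B : Set G)) :
    ∀ (L : List (ℤˣ × G)),
      L.Chain' (fun a b => a.2 ∈ toSubgroup A B a.1 → a.1 = b.1) →
      L ≠ [] → ∀ h₀ : G,
      ∃ W : ReducedWord G A B,
        W.head = h₀ ∧
        W.toList.head?.map Prod.fst = L.head?.map Prod.fst ∧
        W.toList.getLast? = L.head?.map (fun p => (-p.1, h₀⁻¹)) ∧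
        W.prod φ = of h₀ * (L.map (fun x => t ^ (x.1 : ℤ) * of x.2)).prod * of c *
          ((L.map (fun x => t ^ (x.1 : ℤ) * of x.2)).prod)⁻¹ * (of h₀)⁻¹ := by
  intro L
  induction L with
  | nil => intro _ h; exact absurd rfl h
  | cons p L' ih =>
    obtain ⟨u, a⟩ := p
    intro hchain _ h₀
    rcases eq_or_ne L' [] with rfl | hL'
    · refine ⟨⟨h₀, [(u, a * c * a⁻¹), (-u, h₀⁻¹)], ?_⟩, rfl, rfl, rfl, ?_⟩
      · refine List.isChain_cons_cons.2 ⟨?_, List.isChain_singleton _⟩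
        intro hmem
        exfalso
        refine hc a ?_
        rcases Int.units_eq_one_or u with rfl | rfl
        · exact Or.inl hmem
        · exact Or.inr hmem
      · simp only [ReducedWord.prod, List.map_cons, List.map_nil, List.prod_cons,
          List.prod_nil, map_mul, map_inv, Units.val_neg, zpow_neg, mul_one]
        group
    · have hch' : L'.Chain' (fun a b => a.2 ∈ toSubgroup A B a.1 → a.1 = b.1) :=
        (List.isChain_cons.1 hchain).2
      have hlink := (List.isChain_cons.1 hchain).1
      obtain ⟨W', hWhead, hWfst, hWlast, hWprod⟩ := ih hch' hL' a
      obtain ⟨q, L'', rfl⟩ := List.exists_cons_of_ne_nil hL'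
      have hWne : W'.toList ≠ [] := by
        intro h
        rw [h] at hWlast
        simp at hWlast
      refine ⟨⟨h₀, (u, a) :: (W'.toList ++ [(-u, h₀⁻¹)]), ?_⟩, rfl, ?_, ?_, ?_⟩
      · refine List.isChain_cons.2 ⟨?_, List.isChain_append.2 ⟨W'.chain,
          List.isChain_singleton _, ?_⟩⟩
        · intro b hb hmem
          rw [List.head?_append_of_ne_nil _ hWne] at hb
          have : b.1 = q.1 := by
            have hb' : W'.toList.head? = some b := hb
            rw [hb'] at hWfst
            simpa using hWfst
          rw [this]
          exact hlink q rfl hmem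
        · intro x hx y hy
          rw [Option.mem_def, hWlast] at hx
          simp only [List.head?_cons, Option.mem_def, Option.some_inj] at hy
          simp only [List.head?_cons, Option.map_some] at hx
          subst hy
          cases Option.some_inj.1 hx
          intro hmem
          simp only
          rw [inv_mem_iff] at hmem
          have h4 : u = q.1 := by
            by_contra hne
            have huq : -q.1 = u := by
              rcases Int.units_eq_one_or u with hu | hu <;>
                rcases Int.units_eq_one_or q.1 with hq | hq <;>
                simp [hu, hq] at hne ⊢
            rw [huq] at hmem
            exact hne (hlink q rfl hmem)
          rw [h4]
      · simp
      · show ((((u, a) :: W'.toList)) ++ [(-u, h₀⁻¹)]).getLast? = _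
        exact List.getLast?_concat
      · have hWprodlist : (W'.toList.map (fun x => t ^ (x.1 : ℤ) * of x.2)).prod
            = (of a)⁻¹ * (W'.prod φ : HNNExtension G A B φ) := by
          rw [ReducedWord.prod, hWhead]; group
        simp only [ReducedWord.prod, List.map_cons, List.map_append, List.prod_cons,
          List.prod_append, List.map_nil, List.prod_nil] at *
        rw [hWprodlist, hWprod]
        simp only [map_inv, Units.val_neg, zpow_neg, mul_one]
        group

end BalAux

theorem balanced_element_of_HNN_of_no_power_conjugate_into_assoc
    {H : Type*} [Group H] (hH : IsBalancedGroup H) (A B : Subgroup H) (φ : A ≃* B)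
    (g : H) (hg : ¬ IsOfFinOrder g)
    (hcon : ∀ n : ℤ, n ≠ 0 → ∀ h : H, h * g ^ n * h⁻¹ ∉ (A : Set H) ∪ (B : Set H)) :
    ∀ k : HNNExtension H A B φ, ∀ n m : ℤ,
      k * (HNNExtension.of g) ^ n * k⁻¹ = (HNNExtension.of g) ^ m → |n| = |m| := by
  intro k n m hk
  rcases eq_or_ne n 0 with rfl | hn
  · simp only [zpow_zero, mul_one, mul_inv_cancel] at hk
    have h1 : g ^ m = 1 := by
      apply HNNExtension.of_injective (φ := φ)
      rw [map_zpow, map_one, ← hk]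
    have hm : m = 0 := by
      by_contra hm
      exact hg (isOfFinOrder_iff_zpow_eq_one.2 ⟨m, hm, h1⟩)
    simp [hm]
  · rcases HNNExtension.NormalWord.TransversalPair.nonempty H A B with ⟨d⟩
    set w := HNNExtension.NormalWord.equiv φ d k with hw
    have hkprod : w.prod φ = k := (HNNExtension.NormalWord.equiv φ d).symm_apply_apply k
    by_cases hnil : w.toList = []
    · have hk0 : HNNExtension.of w.head = k := by
        rw [← hkprod]
        show HNNExtension.of w.head = of w.head *
          (w.toList.map (fun x => t ^ (x.1 : ℤ) * of x.2)).prod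
        rw [hnil]
        simp
      have heq : HNNExtension.of (φ := φ) (w.head * g ^ n * w.head⁻¹) =
          HNNExtension.of (g ^ m) := by
        simp only [map_mul, map_zpow, map_inv]
        rw [hk0, hk]
      exact hH g hg w.head n m (HNNExtension.of_injective (φ := φ) heq)
    · obtain ⟨W, -, -, hWlast, hWprod⟩ :=
        BalAux.key φ (g ^ n) (hcon n hn) w.toList w.chain hnil w.head
      have hQ : HNNExtension.of w.head *
          (w.toList.map (fun x => t ^ (x.1 : ℤ) * of x.2)).prod = k := by
        rw [← hkprod]; rfl
      have hWr : W.prod φ = HNNExtension.of (g ^ m) := by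
        calc W.prod φ = (HNNExtension.of w.head *
              (w.toList.map (fun x => t ^ (x.1 : ℤ) * of x.2)).prod) *
              HNNExtension.of g ^ n *
              (HNNExtension.of w.head *
              (w.toList.map (fun x => t ^ (x.1 : ℤ) * of x.2)).prod)⁻¹ := by
                rw [hWprod, map_zpow]; group
          _ = k * HNNExtension.of g ^ n * k⁻¹ := by rw [hQ]
          _ = HNNExtension.of g ^ m := hk
          _ = HNNExtension.of (g ^ m) := (map_zpow _ _ _).symm
      have hnilW := HNNExtension.ReducedWord.toList_eq_nil_of_mem_of_range φ W
        ⟨g ^ m, hWr.symm⟩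
      rw [hnilW] at hWlast
      obtain ⟨p, L, hpl⟩ := List.exists_cons_of_ne_nil hnil
      rw [hpl] at hWlast
      simp at hWlast
end
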